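/- Let n, k, r be positive integers with 2k ≤ n. Suppose there exists d : {0,1}^n → ℝ≥0 with E[d] = 1, supported on the Hamming ball B_r of radius r around 0^n, such that (Ad)(x) ≥ (n − 2k + 1)·d(x) for all x ∈ {0,1}^n, where A is the adjacency operator of the Hamming graph. Then every (k−1)-wise independent random variable X on {0,1}^n satisfies H(X) ≥ n − log₂ n − log₂(∑_{i=0}^{r} C(n, i)), where C(n,i) is the binomial coefficient. -/

import Mathlib

/-- `p` is the probability mass function of a `k`-wise independent random variable
taking values in `{0,1}^n`. -/
def KWiseIndep (n k : ℕ) (p : (Fin n → Bool) → ℝ) : Prop :=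
  ∀ S : Finset (Fin n), S.card ≤ k → ∀ a : Fin n → Bool,
    (∑ x ∈ Finset.univ.filter fun x => ∀ i ∈ S, x i = a i, p x) = (1 / 2 : ℝ) ^ S.card

/-- Shannon entropy (base 2) of a pmf on `{0,1}^n`. -/
noncomputable def shannonEntropy {n : ℕ} (p : (Fin n → Bool) → ℝ) : ℝ :=
  -∑ x, p x * Real.logb 2 (p x)

/-- The adjacency operator of the Hamming graph on `{0,1}^n`. -/
def adjOp {n : ℕ} (f : (Fin n → Bool) → ℝ) (x : Fin n → Bool) : ℝ :=
  ∑ y ∈ Finset.univ.filter fun y => hammingDist x y = 1, f y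

/-- Hamming weight of `x ∈ {0,1}^n`. -/
def hWt {n : ℕ} (x : Fin n → Bool) : ℕ := (Finset.univ.filter fun i => x i = true).card

namespace EFEaux

open Finset

variable {n : ℕ}

def xv (x y : Fin n → Bool) : Fin n → Bool := fun i => Bool.xor (x i) (y i)

def zeroX (n : ℕ) : Fin n → Bool := fun _ => false

noncomputable def chi (S : Finset (Fin n)) (x : Fin n → Bool) : ℝ :=
  ∏ i ∈ S, (if x i then (-1 : ℝ) else 1)

lemma xv_xv (y z : Fin n → Bool) : xv y (xv y z) = z := by
  funext i; cases h1 : y i <;> cases h2 : z i <;> simp [xv, h1, h2]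

lemma xv_zero (y : Fin n → Bool) : xv y (zeroX n) = y := by
  funext i; cases h1 : y i <;> simp [xv, zeroX, h1]

lemma xv_eq_zero_iff {a b : Fin n → Bool} : xv a b = zeroX n ↔ a = b := by
  constructor
  · intro h; funext i
    have := congrFun h i
    cases h1 : a i <;> cases h2 : b i <;> simp_all [xv, zeroX]
  · rintro rfl; funext i; cases h1 : a i <;> simp [xv, zeroX, h1]

lemma chi_mul (S : Finset (Fin n)) (x y : Fin n → Bool) :
    chi S x * chi S y = chi S (xv x y) := by
  rw [chi, chi, chi, ← Finset.prod_mul_distrib]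
  refine Finset.prod_congr rfl fun i _ => ?_
  cases h1 : x i <;> cases h2 : y i <;> norm_num [xv, h1, h2]

lemma chi_empty (x : Fin n → Bool) : chi (∅ : Finset (Fin n)) x = 1 := by simp [chi]


lemma chi_update (S : Finset (Fin n)) (x : Fin n → Bool) (i : Fin n) :
    chi S (Function.update x i (!(x i))) = (if i ∈ S then (-1:ℝ) else 1) * chi S x := by
  by_cases hi : i ∈ S
  · rw [if_pos hi]
    have h1 : chi S (Function.update x i (!(x i))) =
        ∏ j ∈ S, Function.update (fun j => if x j then (-1:ℝ) else 1) i
          (if !(x i) then (-1:ℝ) else 1) j := by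
      refine Finset.prod_congr rfl fun j _ => ?_
      by_cases hj : j = i
      · subst hj; simp
      · simp [Function.update_of_ne hj]
    rw [h1, Finset.prod_update_of_mem hi, ← Finset.erase_eq]
    have h2 : chi S x = (if x i then (-1:ℝ) else 1) * ∏ j ∈ S.erase i, (if x j then (-1:ℝ) else 1) :=
      (Finset.mul_prod_erase S _ hi).symm
    rw [h2]; cases hxi : x i <;> simp [hxi]
  · rw [if_neg hi, one_mul]
    refine Finset.prod_congr rfl fun j hj => ?_
    have : j ≠ i := fun h => hi (h ▸ hj)
    simp [Function.update_of_ne this]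

lemma sum_chi (z : Fin n → Bool) :
    ∑ S : Finset (Fin n), chi S z = if z = zeroX n then (2:ℝ)^n else 0 := by
  have h := Finset.prod_add (fun i : Fin n => if z i then (-1:ℝ) else 1)
      (fun _ : Fin n => (1:ℝ)) Finset.univ
  simp only [Finset.prod_const_one, mul_one] at h
  have huniv : (Finset.univ : Finset (Finset (Fin n))) = Finset.univ.powerset := by
    rw [Finset.powerset_univ]
  rw [huniv]
  have heq : ∑ S ∈ Finset.univ.powerset, chi S z
      = ∑ S ∈ Finset.univ.powerset, ∏ i ∈ S, (if z i then (-1:ℝ) else 1) := rfl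
  rw [heq, ← h]
  by_cases hz : z = zeroX n
  · subst hz; norm_num [zeroX]
  · rw [if_neg hz]
    have : ∃ i, z i = true := by
      by_contra hc
      push_neg at hc
      exact hz (funext fun i => by simpa [zeroX] using hc i)
    obtain ⟨i, hi⟩ := this
    exact Finset.prod_eq_zero (Finset.mem_univ i) (by simp [hi])

noncomputable def Ft (f : (Fin n → Bool) → ℝ) (S : Finset (Fin n)) : ℝ :=
  ∑ x, f x * chi S x

noncomputable def conv (f g : (Fin n → Bool) → ℝ) (z : Fin n → Bool) : ℝ :=
  ∑ y, f y * g (xv y z)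

lemma parseval (f g : (Fin n → Bool) → ℝ) :
    ∑ S : Finset (Fin n), Ft f S * Ft g S = 2^n * ∑ x, f x * g x := by
  have key : ∀ a b : Fin n → Bool,
      ∑ S : Finset (Fin n), (f a * chi S a) * (g b * chi S b)
        = f a * g b * (if a = b then (2:ℝ)^n else 0) := by
    intro a b
    have : ∀ S : Finset (Fin n), (f a * chi S a) * (g b * chi S b)
        = f a * g b * chi S (xv a b) := by
      intro S; rw [← chi_mul]; ring
    rw [Finset.sum_congr rfl fun S _ => this S, ← Finset.mul_sum, sum_chi]
    congr 1
    simp [xv_eq_zero_iff]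
  calc ∑ S : Finset (Fin n), Ft f S * Ft g S
      = ∑ S : Finset (Fin n), ∑ a, ∑ b, (f a * chi S a) * (g b * chi S b) := by
        refine Finset.sum_congr rfl fun S _ => ?_
        rw [Ft, Ft, Finset.sum_mul_sum]
    _ = ∑ a, ∑ b, ∑ S : Finset (Fin n), (f a * chi S a) * (g b * chi S b) := by
        rw [Finset.sum_comm]
        exact Finset.sum_congr rfl fun a _ => Finset.sum_comm
    _ = ∑ a, ∑ b, f a * g b * (if a = b then (2:ℝ)^n else 0) := by
        exact Finset.sum_congr rfl fun a _ => Finset.sum_congr rfl fun b _ => key a b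
    _ = ∑ a, f a * g a * (2:ℝ)^n := by
        refine Finset.sum_congr rfl fun a _ => ?_
        rw [Finset.sum_eq_single a]
        · simp
        · intro b _ hb; simp [Ne.symm hb]
        · intro h; exact absurd (Finset.mem_univ a) h
    _ = 2^n * ∑ x, f x * g x := by rw [Finset.mul_sum]; exact Finset.sum_congr rfl fun a _ => by ring


def flip (i : Fin n) (x : Fin n → Bool) : Fin n → Bool := Function.update x i (!(x i))

lemma flip_flip (i : Fin n) (x : Fin n → Bool) : flip i (flip i x) = x := by
  funext j
  by_cases hj : j = i
  · subst hj; simp [flip]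
  · simp [flip, Function.update_of_ne hj]

lemma flip_bijective (i : Fin n) : Function.Bijective (flip (n := n) i) :=
  Function.Involutive.bijective (flip_flip i)

lemma xv_bijective (y : Fin n → Bool) : Function.Bijective (xv y) :=
  Function.Involutive.bijective (xv_xv y)

lemma chi_flip (S : Finset (Fin n)) (i : Fin n) (x : Fin n → Bool) :
    chi S (flip i x) = (if i ∈ S then (-1:ℝ) else 1) * chi S x := chi_update S x i

lemma sum_coeff (S : Finset (Fin n)) :
    ∑ i : Fin n, (if i ∈ S then (-1:ℝ) else 1) = (n:ℝ) - 2 * S.card := by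
  have h : ∀ i : Fin n, (if i ∈ S then (-1:ℝ) else 1)
      = 1 - 2 * (if i ∈ S then (1:ℝ) else 0) := by
    intro i; split <;> norm_num
  rw [Finset.sum_congr rfl fun i _ => h i, Finset.sum_sub_distrib]
  rw [← Finset.mul_sum, Finset.sum_boole]
  simp [Finset.filter_univ_mem]

lemma filter_dist_one (x : Fin n → Bool) :
    (Finset.univ.filter fun y => hammingDist x y = 1)
      = Finset.image (fun i => flip i x) Finset.univ := by
  ext y
  simp only [Finset.mem_filter, Finset.mem_image, Finset.mem_univ, true_and]
  constructor
  · intro h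
    have h' : (Finset.univ.filter fun i => x i ≠ y i).card = 1 := h
    obtain ⟨i, hi⟩ := Finset.card_eq_one.mp h'
    refine ⟨i, ?_⟩
    have hixy : x i ≠ y i := by
      have : i ∈ Finset.univ.filter fun i => x i ≠ y i := hi ▸ Finset.mem_singleton_self i
      exact (Finset.mem_filter.mp this).2
    funext j
    by_cases hj : j = i
    · subst hj
      rw [flip, Function.update_self]
      cases hxj : x j <;> cases hyj : y j <;> simp_all
    · rw [flip, Function.update_of_ne hj]
      by_contra hne
      have : j ∈ Finset.univ.filter fun i => x i ≠ y i :=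
        Finset.mem_filter.mpr ⟨Finset.mem_univ j, fun h => hne h⟩
      rw [hi, Finset.mem_singleton] at this
      exact hj this
  · rintro ⟨i, rfl⟩
    show (Finset.univ.filter fun j => x j ≠ flip i x j).card = 1
    have : (Finset.univ.filter fun j => x j ≠ flip i x j) = {i} := by
      ext j
      simp only [Finset.mem_filter, Finset.mem_univ, true_and, Finset.mem_singleton]
      by_cases hj : j = i
      · subst hj
        rw [flip, Function.update_self]
        cases x j <;> simp
      · rw [flip, Function.update_of_ne hj]
        simp [hj]
    rw [this, Finset.card_singleton]

lemma sum_flip (f : (Fin n → Bool) → ℝ) (x : Fin n → Bool) :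
    adjOp f x = ∑ i, f (flip i x) := by
  rw [adjOp, filter_dist_one, Finset.sum_image]
  intro i _ j _ hij
  by_contra hne
  have : flip i x i = flip j x i := congrFun hij i
  rw [flip, flip, Function.update_self, Function.update_of_ne hne] at this
  cases x i <;> simp_all

lemma Ft_adj (f : (Fin n → Bool) → ℝ) (S : Finset (Fin n)) :
    Ft (adjOp f) S = ((n:ℝ) - 2 * S.card) * Ft f S := by
  calc Ft (adjOp f) S = ∑ x, ∑ i, f (flip i x) * chi S x := by
        rw [Ft]
        refine Finset.sum_congr rfl fun x _ => ?_
        rw [sum_flip, Finset.sum_mul]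
    _ = ∑ i, ∑ x, f (flip i x) * chi S x := Finset.sum_comm
    _ = ∑ i, ∑ u, f u * chi S (flip i u) := by
        refine Finset.sum_congr rfl fun i _ => ?_
        refine Fintype.sum_bijective (flip i) (flip_bijective i)
          (fun x => f (flip i x) * chi S x) (fun u => f u * chi S (flip i u)) fun x => ?_
        simp only [flip_flip]
    _ = ∑ i, (if i ∈ S then (-1:ℝ) else 1) * Ft f S := by
        refine Finset.sum_congr rfl fun i _ => ?_
        rw [Ft, Finset.mul_sum]
        refine Finset.sum_congr rfl fun u _ => ?_
        rw [chi_flip]; ring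
    _ = ((n:ℝ) - 2 * S.card) * Ft f S := by rw [← Finset.sum_mul, sum_coeff]

lemma Ft_conv (f g : (Fin n → Bool) → ℝ) (S : Finset (Fin n)) :
    Ft (conv f g) S = Ft f S * Ft g S := by
  calc Ft (conv f g) S = ∑ z, ∑ y, f y * g (xv y z) * chi S z := by
        rw [Ft]
        refine Finset.sum_congr rfl fun z _ => ?_
        rw [conv, Finset.sum_mul]
    _ = ∑ y, ∑ z, f y * g (xv y z) * chi S z := Finset.sum_comm
    _ = ∑ y, ∑ t, f y * g t * chi S (xv y t) := by
        refine Finset.sum_congr rfl fun y _ => ?_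
        refine Fintype.sum_bijective (xv y) (xv_bijective y)
          (fun z => f y * g (xv y z) * chi S z) (fun t => f y * g t * chi S (xv y t)) fun z => ?_
        simp only [xv_xv]
    _ = ∑ y, ∑ t, (f y * chi S y) * (g t * chi S t) := by
        refine Finset.sum_congr rfl fun y _ => Finset.sum_congr rfl fun t _ => ?_
        rw [← chi_mul]; ring
    _ = Ft f S * Ft g S := by
        rw [Ft, Ft, Finset.sum_mul_sum]

lemma xv_flip (y z : Fin n → Bool) (i : Fin n) :
    xv y (flip i z) = flip i (xv y z) := by
  funext j
  by_cases hj : j = i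
  · subst hj
    simp only [xv, flip, Function.update_self]
    cases y j <;> cases z j <;> rfl
  · simp only [xv, flip, Function.update_of_ne hj]

lemma adj_conv (d : (Fin n → Bool) → ℝ) (z : Fin n → Bool) :
    adjOp (conv d d) z = ∑ y, d y * adjOp d (xv y z) := by
  rw [sum_flip]
  calc ∑ i, conv d d (flip i z) = ∑ i, ∑ y, d y * d (flip i (xv y z)) := by
        refine Finset.sum_congr rfl fun i _ => ?_
        rw [conv]
        exact Finset.sum_congr rfl fun y _ => by rw [xv_flip]
    _ = ∑ y, ∑ i, d y * d (flip i (xv y z)) := Finset.sum_comm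
    _ = ∑ y, d y * adjOp d (xv y z) := by
        refine Finset.sum_congr rfl fun y _ => ?_
        rw [sum_flip, Finset.mul_sum]


lemma Ft_small {k : ℕ} {p : (Fin n → Bool) → ℝ} (hpk : KWiseIndep n k p)
    {S : Finset (Fin n)} (hS : S ≠ ∅) (hcard : S.card ≤ k) : Ft p S = 0 := by
  classical
  set c : (Fin n → Bool) → (Fin n → Bool) := fun x i => if i ∈ S then x i else false with hc
  have hfib : ∑ a : Fin n → Bool,
      ∑ x ∈ Finset.univ.filter (fun x => c x = a), p x * chi S x = Ft p S := by
    rw [Ft]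
    exact Finset.sum_fiberwise_of_maps_to (fun x _ => Finset.mem_univ (c x)) _
  set A : Finset (Fin n → Bool) :=
    Finset.univ.filter (fun a : Fin n → Bool => ∀ i, i ∉ S → a i = false) with hA
  have hinner : ∀ a : Fin n → Bool,
      (∑ x ∈ Finset.univ.filter (fun x => c x = a), p x * chi S x)
        = if a ∈ A then chi S a * (1/2:ℝ)^S.card else 0 := by
    intro a
    by_cases ha : a ∈ A
    · rw [if_pos ha]
      have haS : ∀ i, i ∉ S → a i = false := (Finset.mem_filter.mp ha).2
      have hchi : ∀ x ∈ Finset.univ.filter (fun x => c x = a), chi S x = chi S a := by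
        intro x hx
        have hcx : c x = a := (Finset.mem_filter.mp hx).2
        refine Finset.prod_congr rfl fun i hi => ?_
        have h2 : (if i ∈ S then x i else false) = a i := congrFun hcx i
        rw [if_pos hi] at h2
        rw [h2]
      have hset : Finset.univ.filter (fun x => c x = a)
          = Finset.univ.filter (fun x => ∀ i ∈ S, x i = a i) := by
        ext x
        simp only [Finset.mem_filter, Finset.mem_univ, true_and]
        constructor
        · intro hcx i hi
          have h2 : (if i ∈ S then x i else false) = a i := congrFun hcx i
          rwa [if_pos hi] at h2
        · intro hx
          funext i
          show (if i ∈ S then x i else false) = a i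
          by_cases hi : i ∈ S
          · rw [if_pos hi]; exact hx i hi
          · rw [if_neg hi]; exact (haS i hi).symm
      calc ∑ x ∈ Finset.univ.filter (fun x => c x = a), p x * chi S x
          = ∑ x ∈ Finset.univ.filter (fun x => c x = a), p x * chi S a :=
            Finset.sum_congr rfl fun x hx => by rw [hchi x hx]
        _ = (∑ x ∈ Finset.univ.filter (fun x => c x = a), p x) * chi S a := by
            rw [Finset.sum_mul]
        _ = (1/2:ℝ)^S.card * chi S a := by rw [hset, hpk S hcard a]
        _ = chi S a * (1/2:ℝ)^S.card := by ring
    · rw [if_neg ha]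
      have : Finset.univ.filter (fun x => c x = a) = ∅ := by
        rw [Finset.filter_eq_empty_iff]
        intro x _ hcx
        refine ha (Finset.mem_filter.mpr ⟨Finset.mem_univ a, fun i hi => ?_⟩)
        have h2 : (if i ∈ S then x i else false) = a i := congrFun hcx i
        rw [if_neg hi] at h2
        exact h2.symm
      rw [this, Finset.sum_empty]
  have hsum0 : ∑ a ∈ A, chi S a * (1/2:ℝ)^S.card = 0 := by
    obtain ⟨i₀, hi₀⟩ := Finset.nonempty_iff_ne_empty.mpr hS
    refine Finset.sum_involution (fun a _ => flip i₀ a) ?_ ?_ ?_ ?_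
    · intro a _
      rw [chi_flip, if_pos hi₀]
      ring
    · intro a _ _
      intro h
      have h2 := congrFun h i₀
      simp only [flip, Function.update_self] at h2
      cases a i₀ <;> simp_all
    · intro a ha
      refine Finset.mem_filter.mpr ⟨Finset.mem_univ _, fun i hi => ?_⟩
      have hne : i ≠ i₀ := fun h => hi (h ▸ hi₀)
      show Function.update a i₀ (!(a i₀)) i = false
      rw [Function.update_of_ne hne]
      exact (Finset.mem_filter.mp ha).2 i hi
    · intro a _
      exact flip_flip i₀ a
  calc Ft p S = ∑ a : Fin n → Bool, if a ∈ A then chi S a * (1/2:ℝ)^S.card else 0 := by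
        rw [← hfib]
        exact Finset.sum_congr rfl fun a _ => hinner a
    _ = ∑ a ∈ A, chi S a * (1/2:ℝ)^S.card := by
        rw [Finset.sum_ite_mem, Finset.univ_inter]
    _ = 0 := hsum0


lemma shell_card (i : ℕ) :
    (Finset.univ.filter fun x : Fin n → Bool => hWt x = i).card ≤ n.choose i := by
  classical
  have h := Finset.card_le_card_of_injOn
    (f := fun x : Fin n → Bool => Finset.univ.filter fun j => x j = true)
    (s := Finset.univ.filter fun x : Fin n → Bool => hWt x = i)
    (t := Finset.powersetCard i (Finset.univ : Finset (Fin n)))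
    ?_ ?_
  · calc (Finset.univ.filter fun x : Fin n → Bool => hWt x = i).card
        ≤ (Finset.powersetCard i (Finset.univ : Finset (Fin n))).card := h
      _ = n.choose i := by
          rw [Finset.card_powersetCard, Finset.card_univ, Fintype.card_fin]
  · intro x hx
    rw [Finset.mem_coe, Finset.mem_powersetCard]
    exact ⟨Finset.filter_subset _ _, (Finset.mem_filter.mp (Finset.mem_coe.mp hx)).2⟩
  · intro x _ y _ hxy
    funext j
    have hxy' : (Finset.univ.filter fun j => x j = true)
        = (Finset.univ.filter fun j => y j = true) := hxy
    have h1 : (j ∈ Finset.univ.filter fun j => x j = true)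
        ↔ (j ∈ Finset.univ.filter fun j => y j = true) := by rw [hxy']
    simp only [Finset.mem_filter, Finset.mem_univ, true_and] at h1
    cases hx : x j <;> cases hy : y j <;> simp_all

lemma ball_card (r : ℕ) :
    ((Finset.univ.filter fun x : Fin n → Bool => hWt x ≤ r).card : ℝ)
      ≤ ((∑ i ∈ Finset.range (r + 1), n.choose i : ℕ) : ℝ) := by
  classical
  have hmap : ∀ x ∈ Finset.univ.filter fun x : Fin n → Bool => hWt x ≤ r,
      hWt x ∈ Finset.range (r + 1) := by
    intro x hx
    rw [Finset.mem_range, Nat.lt_succ_iff]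
    exact (Finset.mem_filter.mp hx).2
  have h := Finset.card_eq_sum_card_fiberwise hmap
  have h2 : (Finset.univ.filter fun x : Fin n → Bool => hWt x ≤ r).card
      ≤ ∑ i ∈ Finset.range (r + 1), n.choose i := by
    rw [h]
    refine Finset.sum_le_sum fun i _ => ?_
    calc ((Finset.univ.filter fun x : Fin n → Bool => hWt x ≤ r).filter
            fun x => hWt x = i).card
        ≤ (Finset.univ.filter fun x : Fin n → Bool => hWt x = i).card := by
          apply Finset.card_le_card
          intro x hx
          rw [Finset.mem_filter] at hx ⊢
          exact ⟨Finset.mem_univ x, hx.2⟩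
      _ ≤ n.choose i := shell_card i
  exact_mod_cast h2

lemma entropy_ge_renyi {p : (Fin n → Bool) → ℝ} (hp0 : ∀ x, 0 ≤ p x)
    (hp1 : ∑ x, p x = 1) :
    shannonEntropy p ≥ -Real.logb 2 (∑ x, p x ^ 2) := by
  classical
  set t : Finset (Fin n → Bool) := Finset.univ.filter fun x => p x ≠ 0 with ht
  have hw1 : ∑ x ∈ t, p x = 1 := by
    rw [ht, Finset.sum_filter_ne_zero, hp1]
  have hmem : ∀ x ∈ t, p x ∈ Set.Ioi (0:ℝ) := fun x hx =>
    lt_of_le_of_ne (hp0 x) (Ne.symm (Finset.mem_filter.mp hx).2)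
  have hjensen := (StrictConcaveOn.concaveOn strictConcaveOn_log_Ioi).le_map_sum
    (t := t) (w := fun x => p x) (p := fun x => p x)
    (fun x _ => hp0 x) hw1 hmem
  have hL : ∑ x ∈ t, p x • Real.log (p x) = ∑ x, p x * Real.log (p x) := by
    rw [ht]
    refine Eq.trans (Finset.sum_filter_of_ne ?_) ?_
    · intro x _ hne h0
      exact hne (by rw [h0]; simp)
    · exact Finset.sum_congr rfl fun x _ => smul_eq_mul ..
  have hR : ∑ x ∈ t, p x • p x = ∑ x, p x ^ 2 := by
    rw [ht]
    refine Eq.trans (Finset.sum_filter_of_ne ?_) ?_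
    · intro x _ hne h0
      exact hne (by rw [h0]; simp)
    · exact Finset.sum_congr rfl fun x _ => by rw [smul_eq_mul, sq]
  rw [hL, hR] at hjensen
  have hlog2 : (0:ℝ) < Real.log 2 := Real.log_pos one_lt_two
  have hmain : ∑ x, p x * Real.logb 2 (p x) ≤ Real.logb 2 (∑ x, p x ^ 2) := by
    have h1 : ∑ x, p x * Real.logb 2 (p x)
        = (∑ x, p x * Real.log (p x)) / Real.log 2 := by
      rw [Finset.sum_div]
      refine Finset.sum_congr rfl fun x _ => ?_
      rw [Real.logb, mul_div_assoc]
    rw [h1, Real.logb]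
    exact (div_le_div_iff_of_pos_right hlog2).mpr hjensen
  rw [shannonEntropy, ge_iff_le, neg_le_neg_iff]
  exact hmain

end EFEaux

open EFEaux Finset

/-- If there is a nonnegative `d` with `E[d] = 1`, supported on the Hamming ball of
radius `r` around `0`, with `Ad ≥ (n − 2k + 1)·d` pointwise, then every `(k−1)`-wise
independent random variable `X` on `{0,1}^n` has
`H(X) ≥ n − log₂ n − log₂(∑_{i ≤ r} C(n,i))`. -/
theorem entropy_from_eigenfunction (n k r : ℕ) (hn : 0 < n) (hk : 0 < k) (hr : 0 < r)
    (hkn : 2 * k ≤ n)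
    (hd : ∃ d : (Fin n → Bool) → ℝ, (∀ x, 0 ≤ d x) ∧ (∑ x, d x) / 2 ^ n = 1 ∧
      (∀ x, d x ≠ 0 → hWt x ≤ r) ∧
      ∀ x, adjOp d x ≥ ((n : ℝ) - 2 * k + 1) * d x) :
    ∀ p : (Fin n → Bool) → ℝ, (∀ x, 0 ≤ p x) → (∑ x, p x = 1) →
      KWiseIndep n (k - 1) p →
      shannonEntropy p ≥
        (n : ℝ) - Real.logb 2 n -
          Real.logb 2 ((∑ i ∈ Finset.range (r + 1), n.choose i : ℕ) : ℝ) := by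

  classical
  obtain ⟨d, hd0, hdsum, hdsupp, hdeig⟩ := hd
  intro p hp0 hp1 hpk
  have hN : (0:ℝ) < 2^n := by positivity
  have hdsum' : ∑ x, d x = 2^n := by
    rw [div_eq_one_iff_eq (ne_of_gt hN)] at hdsum
    exact hdsum
  set Vn : ℕ := ∑ i ∈ Finset.range (r + 1), n.choose i with hVn
  have hV1 : 1 ≤ Vn := by
    have h0 : n.choose 0 ≤ Vn :=
      Finset.single_le_sum (f := fun i => n.choose i) (fun i _ => Nat.zero_le _)
        (Finset.mem_range.mpr (Nat.succ_pos r))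
    simpa using h0
  have hVR : (0:ℝ) < (Vn:ℝ) := by exact_mod_cast Nat.lt_of_lt_of_le Nat.zero_lt_one hV1
  set lam : ℝ := (n:ℝ) - 2*k + 1 with hlam
  set e : (Fin n → Bool) → ℝ := conv d d with he
  set G : (Fin n → Bool) → ℝ := fun z => adjOp e z - (lam - 1) * e z with hG
  have he0 : ∀ z, 0 ≤ e z := fun z =>
    Finset.sum_nonneg fun y _ => mul_nonneg (hd0 y) (hd0 _)
  have hae : ∀ z, lam * e z ≤ adjOp e z := by
    intro z
    rw [he, adj_conv]
    have h1 : ∑ y, d y * (lam * d (xv y z)) ≤ ∑ y, d y * adjOp d (xv y z) :=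
      Finset.sum_le_sum fun y _ => mul_le_mul_of_nonneg_left (hdeig (xv y z)) (hd0 y)
    calc lam * conv d d z = ∑ y, d y * (lam * d (xv y z)) := by
          rw [conv, Finset.mul_sum]
          exact Finset.sum_congr rfl fun y _ => by ring
      _ ≤ ∑ y, d y * adjOp d (xv y z) := h1
  have hGe : ∀ z, e z ≤ G z := by
    intro z
    have := hae z
    rw [hG]
    simp only []
    nlinarith [he0 z]
  have hG0 : ∀ z, 0 ≤ G z := fun z => le_trans (he0 z) (hGe z)
  have hw0 : ∀ z, 0 ≤ conv p p z := fun z =>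
    Finset.sum_nonneg fun y _ => mul_nonneg (hp0 y) (hp0 _)
  have hFtd0 : Ft d ∅ = 2^n := by
    rw [Ft]
    rw [Finset.sum_congr rfl fun x _ => by rw [chi_empty, mul_one]]
    exact hdsum'
  have hFtp0 : Ft p ∅ = 1 := by
    rw [Ft]
    rw [Finset.sum_congr rfl fun x _ => by rw [chi_empty, mul_one]]
    exact hp1
  have hFtG : ∀ S : Finset (Fin n), Ft G S = (2*(k:ℝ) - 2*S.card) * (Ft d S)^2 := by
    intro S
    have hlin : Ft G S = Ft (adjOp e) S - (lam - 1) * Ft e S := by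
      rw [Ft, Ft, Ft]
      rw [Finset.mul_sum, ← Finset.sum_sub_distrib]
      refine Finset.sum_congr rfl fun x _ => ?_
      simp only [hG]
      ring
    rw [hlin, Ft_adj, he, Ft_conv, hlam]
    ring
  have hFtw : ∀ S : Finset (Fin n), Ft (conv p p) S = (Ft p S)^2 := by
    intro S
    rw [Ft_conv, sq]
  have hparse : ∑ S : Finset (Fin n), Ft G S * Ft (conv p p) S
      = 2^n * ∑ z, G z * conv p p z := parseval G (conv p p)
  have hterm : ∀ S : Finset (Fin n),
      Ft G S * Ft (conv p p) S ≤ if S = ∅ then 2*(k:ℝ) * (2^n)^2 else 0 := by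
    intro S
    rw [hFtG, hFtw]
    by_cases hS : S = ∅
    · subst hS
      rw [if_pos rfl, hFtd0, hFtp0]
      simp
    · rw [if_neg hS]
      by_cases hSc : S.card ≤ k - 1
      · rw [Ft_small hpk hS hSc]
        simp
      · have hkc : (k:ℝ) ≤ (S.card:ℝ) := by
          have : k ≤ S.card := by omega
          exact_mod_cast this
        have h1 : (2*(k:ℝ) - 2*S.card) ≤ 0 := by linarith
        have h2 : (0:ℝ) ≤ (Ft d S)^2 * (Ft p S)^2 := by positivity
        nlinarith
  have hsum : ∑ S : Finset (Fin n), Ft G S * Ft (conv p p) S ≤ 2*(k:ℝ) * (2^n)^2 := by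
    calc ∑ S : Finset (Fin n), Ft G S * Ft (conv p p) S
        ≤ ∑ S : Finset (Fin n), if S = ∅ then 2*(k:ℝ) * (2^n)^2 else 0 :=
          Finset.sum_le_sum fun S _ => hterm S
      _ = 2*(k:ℝ) * (2^n)^2 := by
          rw [Finset.sum_ite_eq' Finset.univ (∅ : Finset (Fin n))]
          rw [if_pos (Finset.mem_univ _)]
  have hzsum : ∑ z, G z * conv p p z ≤ 2*(k:ℝ) * 2^n := by
    have h1 : 2^n * ∑ z, G z * conv p p z ≤ 2^n * (2*(k:ℝ) * 2^n) := by
      rw [← hparse]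
      calc ∑ S : Finset (Fin n), Ft G S * Ft (conv p p) S ≤ 2*(k:ℝ) * (2^n)^2 := hsum
        _ = 2^n * (2*(k:ℝ) * 2^n) := by ring
    exact le_of_mul_le_mul_left h1 hN
  have hsingle : G (zeroX n) * conv p p (zeroX n) ≤ ∑ z, G z * conv p p z :=
    Finset.single_le_sum (f := fun z => G z * conv p p z)
      (fun z _ => mul_nonneg (hG0 z) (hw0 z)) (Finset.mem_univ _)
  -- Cauchy-Schwarz on the ball
  set B : Finset (Fin n → Bool) := Finset.univ.filter fun x => hWt x ≤ r with hB
  have hsuppsum : ∑ x ∈ B, d x = ∑ x, d x := by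
    refine Finset.sum_subset (Finset.subset_univ B) fun x _ hxB => ?_
    by_contra hne
    exact hxB (Finset.mem_filter.mpr ⟨Finset.mem_univ x, hdsupp x hne⟩)
  have he00 : e (zeroX n) = ∑ y, d y * d y := by
    rw [he, conv]
    exact Finset.sum_congr rfl fun y _ => by rw [xv_zero]
  have hCS : (2^n:ℝ)^2 ≤ (Vn:ℝ) * e (zeroX n) := by
    have h1 : (∑ x ∈ B, d x)^2 ≤ (B.card:ℝ) * ∑ x ∈ B, (d x)^2 := by
      exact_mod_cast sq_sum_le_card_mul_sum_sq (s := B) (f := d)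
    have h2 : ∑ x ∈ B, (d x)^2 ≤ ∑ x, (d x)^2 :=
      Finset.sum_le_sum_of_subset_of_nonneg (Finset.subset_univ B)
        fun x _ _ => by positivity
    have h3 : (B.card:ℝ) ≤ (Vn:ℝ) := ball_card r
    have h4 : (0:ℝ) ≤ ∑ x ∈ B, (d x)^2 := Finset.sum_nonneg fun x _ => by positivity
    have h5 : (0:ℝ) ≤ ∑ x, (d x)^2 := Finset.sum_nonneg fun x _ => by positivity
    calc (2^n:ℝ)^2 = (∑ x ∈ B, d x)^2 := by rw [hsuppsum, hdsum']
      _ ≤ (B.card:ℝ) * ∑ x ∈ B, (d x)^2 := h1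
      _ ≤ (Vn:ℝ) * ∑ x, (d x)^2 := by
          exact mul_le_mul h3 h2 h4 (le_of_lt hVR)
      _ = (Vn:ℝ) * e (zeroX n) := by
          rw [he00]
          congr 1
          exact Finset.sum_congr rfl fun y _ => sq (d y) ▸ by rw [sq]
  have hw00 : conv p p (zeroX n) = ∑ x, p x ^ 2 := by
    rw [conv]
    refine Finset.sum_congr rfl fun y _ => ?_
    rw [xv_zero, sq]
  set W : ℝ := ∑ x, p x ^ 2 with hW
  have hWpos : 0 < W := by
    have hex : ∃ x, p x ≠ 0 := by
      by_contra hc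
      push_neg at hc
      rw [Finset.sum_congr rfl fun x _ => hc x] at hp1
      simp at hp1
    obtain ⟨x, hx⟩ := hex
    have h1 : p x ^ 2 ≤ W :=
      Finset.single_le_sum (f := fun x => p x ^ 2) (fun y _ => by positivity)
        (Finset.mem_univ x)
    have h2 : 0 < p x ^ 2 := by positivity
    linarith
  -- main quantitative bound : W * 2^n ≤ n * Vn
  have hmain : W * 2^n ≤ (n:ℝ) * (Vn:ℝ) := by
    have hGW : G (zeroX n) * W ≤ 2*(k:ℝ) * 2^n := by
      rw [← hw00]
      exact le_trans hsingle hzsum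
    have hG0e : e (zeroX n) ≤ G (zeroX n) := hGe _
    have he0' : 0 ≤ e (zeroX n) := he0 _
    have h2k : 2*(k:ℝ) ≤ (n:ℝ) := by exact_mod_cast hkn
    have hstep : W * (2^n:ℝ)^2 ≤ (Vn:ℝ) * ((n:ℝ) * 2^n) := by
      calc W * (2^n:ℝ)^2 ≤ W * ((Vn:ℝ) * e (zeroX n)) := by
            exact mul_le_mul_of_nonneg_left hCS (le_of_lt hWpos)
        _ ≤ W * ((Vn:ℝ) * G (zeroX n)) := by
            refine mul_le_mul_of_nonneg_left ?_ (le_of_lt hWpos)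
            exact mul_le_mul_of_nonneg_left hG0e (le_of_lt hVR)
        _ = (Vn:ℝ) * (G (zeroX n) * W) := by ring
        _ ≤ (Vn:ℝ) * (2*(k:ℝ) * 2^n) := by
            exact mul_le_mul_of_nonneg_left hGW (le_of_lt hVR)
        _ ≤ (Vn:ℝ) * ((n:ℝ) * 2^n) := by
            refine mul_le_mul_of_nonneg_left ?_ (le_of_lt hVR)
            exact mul_le_mul_of_nonneg_right h2k (le_of_lt hN)
    have h3 : W * 2^n * 2^n ≤ (n:ℝ) * (Vn:ℝ) * 2^n := by nlinarith
    exact le_of_mul_le_mul_right h3 hN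
  have hWle : W ≤ (n:ℝ) * (Vn:ℝ) / 2^n := (le_div_iff₀ hN).mpr hmain
  have hent : shannonEntropy p ≥ -Real.logb 2 W := entropy_ge_renyi hp0 hp1
  have hlogle : Real.logb 2 W ≤ Real.logb 2 ((n:ℝ) * (Vn:ℝ) / 2^n) :=
    Real.logb_le_logb_of_le one_lt_two hWpos hWle
  have hnR : (0:ℝ) < (n:ℝ) := by exact_mod_cast hn
  have hlogeq : Real.logb 2 ((n:ℝ) * (Vn:ℝ) / 2^n)
      = Real.logb 2 (n:ℝ) + Real.logb 2 (Vn:ℝ) - (n:ℝ) := by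
    rw [Real.logb_div (by positivity) (ne_of_gt hN)]
    rw [Real.logb_mul (ne_of_gt hnR) (ne_of_gt hVR)]
    rw [Real.logb_pow, Real.logb_self_eq_one one_lt_two]
    ring
  have : Real.logb 2 W ≤ Real.logb 2 (n:ℝ) + Real.logb 2 (Vn:ℝ) - (n:ℝ) := by
    rw [← hlogeq]; exact hlogle
  calc shannonEntropy p ≥ -Real.logb 2 W := hent
    _ ≥ (n:ℝ) - Real.logb 2 (n:ℝ) - Real.logb 2 (Vn:ℝ) := by linarith
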